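/- Let S ⊆ S_Φ be a nonempty set. There exists a closed s-convex subset of S_Φ containing S if and only if there exist a unit vector u ∈ ℝⁿ and α > 0 such that ⟨x, u⟩ ≥ α for all x ∈ S. -/

import Mathlib

open Set
open scoped RealInnerProductSpace

/-- `rho Φ x = x / Φ x` (equal to `0` when `Φ x = 0`, in particular `rho Φ 0 = 0`). -/
noncomputable def rho {n : ℕ} (Φ : EuclideanSpace ℝ (Fin n) → ℝ)
    (x : EuclideanSpace ℝ (Fin n)) : EuclideanSpace ℝ (Fin n) := (Φ x)⁻¹ • x

/-- The `Φ`-sphere `S_Φ = {x | Φ x = 1}`. -/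
def sphereSet {n : ℕ} (Φ : EuclideanSpace ℝ (Fin n) → ℝ) : Set (EuclideanSpace ℝ (Fin n)) :=
  {x | Φ x = 1}

/-- `S` is s-convex: `ρ(λx + (1-λ)y) ∈ S` for all `x, y ∈ S`, `λ ∈ [0,1]`. -/
def SConvex {n : ℕ} (Φ : EuclideanSpace ℝ (Fin n) → ℝ)
    (S : Set (EuclideanSpace ℝ (Fin n))) : Prop :=
  ∀ x ∈ S, ∀ y ∈ S, ∀ l : ℝ, l ∈ Set.Icc (0 : ℝ) 1 → rho Φ (l • x + (1 - l) • y) ∈ S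

lemma isCompact_convexHull_euclidean {n : ℕ} {s : Set (EuclideanSpace ℝ (Fin n))}
    (hs : IsCompact s) : IsCompact (convexHull ℝ s) := by
  classical
  rcases s.eq_empty_or_nonempty with rfl | ⟨x₀, hx₀⟩
  · simpa using isCompact_empty
  set d := n + 1 with hd
  set T : (Fin d → ℝ) × (Fin d → EuclideanSpace ℝ (Fin n)) → EuclideanSpace ℝ (Fin n) :=
    fun p => ∑ j, p.1 j • p.2 j with hT
  have hTc : Continuous T := by
    apply continuous_finset_sum
    intro j _
    exact ((continuous_apply j).comp continuous_fst).smul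
      ((continuous_apply j).comp continuous_snd)
  have hA : IsCompact ((stdSimplex ℝ (Fin d)) ×ˢ (Set.univ.pi fun _ : Fin d => s)) :=
    (isCompact_stdSimplex (𝕜 := ℝ) (ι := Fin d)).prod (isCompact_univ_pi fun _ => hs)
  have himg : convexHull ℝ s = T '' ((stdSimplex ℝ (Fin d)) ×ˢ (Set.univ.pi fun _ : Fin d => s)) := by
    apply Set.Subset.antisymm
    · intro x hx
      obtain ⟨ι, hfin, z, w, hzs, hai, hwpos, hwsum, hx⟩ :=
        eq_pos_convex_span_of_mem_convexHull hx
      have hcard : Fintype.card ι ≤ d := by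
        have h1 := hai.card_le_finrank_succ
        have h2 : Module.finrank ℝ (vectorSpan ℝ (Set.range z)) ≤ n := by
          have := (vectorSpan ℝ (Set.range z)).finrank_le
          rwa [finrank_euclideanSpace_fin] at this
        omega
      obtain ⟨e⟩ : Nonempty (ι ↪ Fin d) := by
        rw [Function.Embedding.nonempty_iff_card_le]
        simpa using hcard
      set W : Fin d → ℝ := Function.extend e w 0 with hW
      set F : Fin d → EuclideanSpace ℝ (Fin n) := Function.extend e z (fun _ => x₀) with hF
      have hWe : ∀ i, W (e i) = w i := fun i => e.injective.extend_apply w 0 i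
      have hFe : ∀ i, F (e i) = z i := fun i => e.injective.extend_apply z _ i
      have hWout : ∀ j, j ∉ Finset.univ.map e → W j = 0 := by
        intro j hj
        apply Function.extend_apply'
        intro ⟨a, ha⟩
        exact hj (Finset.mem_map.2 ⟨a, Finset.mem_univ a, ha⟩)
      have hsum : ∀ (G : Fin d → EuclideanSpace ℝ (Fin n)) , True := fun _ => trivial
      refine ⟨(W, F), ⟨?_, ?_⟩, ?_⟩
      · constructor
        · intro j
          show 0 ≤ W j
          by_cases hj : j ∈ Finset.univ.map e
          · obtain ⟨a, _, rfl⟩ := Finset.mem_map.1 hj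
            rw [hWe]; exact (hwpos a).le
          · rw [hWout j hj]
        · rw [← hwsum]
          rw [← Finset.sum_subset (Finset.subset_univ (Finset.univ.map e))
              (fun j _ hj => hWout j hj)]
          rw [Finset.sum_map]
          exact Finset.sum_congr rfl fun i _ => hWe i
      · intro j _
        show F j ∈ s
        by_cases hj : j ∈ Finset.univ.map e
        · obtain ⟨a, _, rfl⟩ := Finset.mem_map.1 hj
          rw [hFe]; exact hzs ⟨a, rfl⟩
        · have : F j = x₀ := by
            apply Function.extend_apply'
            intro ⟨a, ha⟩
            exact hj (Finset.mem_map.2 ⟨a, Finset.mem_univ a, ha⟩)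
          rw [this]; exact hx₀
      · show ∑ j, W j • F j = x
        rw [← Finset.sum_subset (Finset.subset_univ (Finset.univ.map e))
            (fun j _ hj => by rw [hWout j hj, zero_smul])]
        rw [Finset.sum_map]
        rw [← hx]
        exact Finset.sum_congr rfl fun i _ => by rw [hWe, hFe]
    · rintro x ⟨⟨w, f⟩, ⟨⟨hw0, hw1⟩, hf⟩, rfl⟩
      exact (convex_convexHull ℝ s).sum_mem (fun i _ => hw0 i) hw1
        (fun i _ => subset_convexHull ℝ s (hf i (Set.mem_univ i)))
  rw [himg]
  exact hA.image hTc

section helpers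
variable {n : ℕ} {Φ : EuclideanSpace ℝ (Fin n) → ℝ}

lemma rho_smul (hhom : ∀ (t : ℝ), 0 ≤ t → ∀ x, Φ (t • x) = t * Φ x)
    {t : ℝ} (ht : 0 < t) (x : EuclideanSpace ℝ (Fin n)) :
    rho Φ (t • x) = rho Φ x := by
  unfold rho
  rw [hhom t ht.le, smul_smul, mul_inv]
  by_cases hx : Φ x = 0
  · simp [hx]
  · rw [mul_assoc]
    congr 1
    field_simp

lemma rho_mem_sphere (hhom : ∀ (t : ℝ), 0 ≤ t → ∀ x, Φ (t • x) = t * Φ x)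
    (hnn : ∀ x, 0 ≤ Φ x) {x : EuclideanSpace ℝ (Fin n)} (hx : Φ x ≠ 0) :
    rho Φ x ∈ sphereSet Φ := by
  have : Φ ((Φ x)⁻¹ • x) = (Φ x)⁻¹ * Φ x :=
    hhom _ (inv_nonneg.2 (hnn x)) x
  simp only [sphereSet, rho, mem_setOf_eq, this]
  field_simp

lemma sphere_bounded (hn : 2 ≤ n) (hc : Continuous Φ) (hnn : ∀ x, 0 ≤ Φ x)
    (hhom : ∀ (t : ℝ), 0 ≤ t → ∀ x, Φ (t • x) = t * Φ x)
    (hzero : ∀ x, Φ x = 0 ↔ x = 0) :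
    Bornology.IsBounded (sphereSet Φ) := by
  have hne : (Metric.sphere (0 : EuclideanSpace ℝ (Fin n)) 1).Nonempty := by
    refine ⟨EuclideanSpace.single (⟨0, by omega⟩ : Fin n) (1 : ℝ), ?_⟩
    simp [EuclideanSpace.norm_single]
  obtain ⟨x₀, hx₀, hmin⟩ := (isCompact_sphere (0 : EuclideanSpace ℝ (Fin n)) 1).exists_isMinOn
    hne hc.continuousOn
  have hx₀ne : x₀ ≠ 0 := by
    intro h
    rw [mem_sphere_zero_iff_norm, h, norm_zero] at hx₀
    norm_num at hx₀
  have hm : 0 < Φ x₀ :=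
    lt_of_le_of_ne (hnn x₀) (fun h => hx₀ne ((hzero x₀).1 h.symm))
  rw [isBounded_iff_forall_norm_le]
  refine ⟨(Φ x₀)⁻¹, fun y hy => ?_⟩
  have hyne : y ≠ 0 := by
    intro h
    change (sphereSet Φ) y at hy
    rw [show (sphereSet Φ) y = (Φ y = 1) from rfl] at hy
    rw [h, (hzero 0).2 rfl] at hy
    norm_num at hy
  have hynorm : (0:ℝ) < ‖y‖ := norm_pos_iff.2 hyne
  have hmem : ‖y‖⁻¹ • y ∈ Metric.sphere (0 : EuclideanSpace ℝ (Fin n)) 1 := by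
    rw [mem_sphere_zero_iff_norm, norm_smul, norm_inv, norm_norm]
    field_simp
  have h1 : Φ y = ‖y‖ * Φ (‖y‖⁻¹ • y) := by
    rw [← hhom ‖y‖ (norm_nonneg y) (‖y‖⁻¹ • y), smul_smul]
    field_simp
    rw [one_smul]
  have h2 : Φ x₀ ≤ Φ (‖y‖⁻¹ • y) := hmin hmem
  have hy1 : Φ y = 1 := hy
  rw [hy1] at h1
  have : ‖y‖ * Φ x₀ ≤ 1 := by
    calc ‖y‖ * Φ x₀ ≤ ‖y‖ * Φ (‖y‖⁻¹ • y) := by nlinarith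
    _ = 1 := h1.symm
  have hkey : ‖y‖ = ‖y‖ * Φ x₀ * (Φ x₀)⁻¹ := by field_simp
  rw [hkey]
  calc ‖y‖ * Φ x₀ * (Φ x₀)⁻¹ ≤ 1 * (Φ x₀)⁻¹ :=
        mul_le_mul_of_nonneg_right this (by positivity)
    _ = (Φ x₀)⁻¹ := one_mul _

end helpers

theorem stmt15 {n : ℕ} (hn : 2 ≤ n) (Φ : EuclideanSpace ℝ (Fin n) → ℝ)
    (hc : Continuous Φ) (hnn : ∀ x, 0 ≤ Φ x)
    (hhom : ∀ (t : ℝ), 0 ≤ t → ∀ x, Φ (t • x) = t * Φ x)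
    (hzero : ∀ x, Φ x = 0 ↔ x = 0)
    (S : Set (EuclideanSpace ℝ (Fin n))) (hne : S.Nonempty) (hsub : S ⊆ sphereSet Φ) :
    (∃ C : Set (EuclideanSpace ℝ (Fin n)),
        C ⊆ sphereSet Φ ∧ IsClosed C ∧ SConvex Φ C ∧ S ⊆ C) ↔
      ∃ u : EuclideanSpace ℝ (Fin n), ‖u‖ = 1 ∧ ∃ α : ℝ, 0 < α ∧ ∀ x ∈ S, α ≤ ⟪x, u⟫ := by
  have hΦ0 : Φ 0 = 0 := (hzero 0).2 rfl
  constructor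
  · rintro ⟨C, hCsub, hCcl, hCsc, hSC⟩
    have hCb : Bornology.IsBounded C :=
      (sphere_bounded hn hc hnn hhom hzero).subset hCsub
    have hCcomp : IsCompact C := Metric.isCompact_of_isClosed_isBounded hCcl hCb
    have hKcomp : IsCompact (convexHull ℝ C) := isCompact_convexHull_euclidean hCcomp
    have h0C : (0 : EuclideanSpace ℝ (Fin n)) ∉ C := by
      intro h
      have h1 : Φ 0 = 1 := hCsub h
      rw [hΦ0] at h1; norm_num at h1
    set D : Set (EuclideanSpace ℝ (Fin n)) :=
      {z | ∃ t : ℝ, 0 < t ∧ ∃ x ∈ C, z = t • x} with hD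
    have hCD : C ⊆ D := fun x hx => ⟨1, one_pos, x, hx, (one_smul _ _).symm⟩
    have hDconv : Convex ℝ D := by
      rintro z1 ⟨t1, ht1, x1, hx1, rfl⟩ z2 ⟨t2, ht2, x2, hx2, rfl⟩ a b ha hb hab
      have hc1 : 0 ≤ a * t1 := mul_nonneg ha ht1.le
      have hc2 : 0 ≤ b * t2 := mul_nonneg hb ht2.le
      have hcs : 0 < a * t1 + b * t2 := by
        rcases lt_or_ge 0 a with h | h
        · nlinarith
        · have ha0 : a = 0 := le_antisymm h ha
          have : b = 1 := by linarith
          nlinarith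
      set l : ℝ := a * t1 / (a * t1 + b * t2) with hldef
      have hl : l ∈ Icc (0:ℝ) 1 := by
        constructor
        · exact div_nonneg hc1 hcs.le
        · rw [div_le_one hcs]; linarith
      have hw : rho Φ (l • x1 + (1 - l) • x2) ∈ C := hCsc x1 hx1 x2 hx2 l hl
      set w := l • x1 + (1 - l) • x2 with hwdef
      have hwne : w ≠ 0 := by
        intro h
        rw [h] at hw
        unfold rho at hw
        rw [hΦ0, smul_zero] at hw
        exact h0C hw
      have hΦw : 0 < Φ w := lt_of_le_of_ne (hnn w) (fun h => hwne ((hzero w).1 h.symm))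
      refine ⟨(a * t1 + b * t2) * Φ w, by positivity, rho Φ w, hw, ?_⟩
      have hrw : (Φ w) • rho Φ w = w := by
        unfold rho; rw [smul_smul, mul_inv_cancel₀ hΦw.ne', one_smul]
      have h1ml : 1 - l = b * t2 / (a * t1 + b * t2) := by
        rw [hldef]; field_simp; ring
      calc a • t1 • x1 + b • t2 • x2 = (a * t1) • x1 + (b * t2) • x2 := by
            rw [smul_smul, smul_smul]
        _ = (a * t1 + b * t2) • w := by
            rw [hwdef, smul_add, smul_smul, smul_smul, h1ml, hldef]
            congr 2 <;> field_simp
        _ = ((a * t1 + b * t2) * Φ w) • rho Φ w := by rw [mul_smul, hrw]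
    have h0D : (0 : EuclideanSpace ℝ (Fin n)) ∉ D := by
      rintro ⟨t, ht, x, hx, hx0⟩
      have : x = 0 := by
        rcases smul_eq_zero.1 hx0.symm with h | h
        · exact absurd h ht.ne'
        · exact h
      exact h0C (this ▸ hx)
    have h0K : (0 : EuclideanSpace ℝ (Fin n)) ∉ convexHull ℝ C :=
      fun h => h0D (convexHull_min hCD hDconv h)
    obtain ⟨f, c, hfc, hfb⟩ :=
      geometric_hahn_banach_point_closed (convex_convexHull ℝ C) hKcomp.isClosed h0K
    have hcpos : 0 < c := by rw [map_zero f] at hfc; exact hfc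
    set v := (InnerProductSpace.toDual ℝ (EuclideanSpace ℝ (Fin n))).symm f with hv
    have hvx : ∀ x, ⟪v, x⟫ = f x := fun x => InnerProductSpace.toDual_symm_apply
    obtain ⟨x₀, hx₀S⟩ := hne
    have hvne : v ≠ 0 := by
      intro h
      have h1 := hvx x₀
      rw [h, inner_zero_left] at h1
      have h2 := hfb x₀ (subset_convexHull ℝ C (hSC hx₀S))
      rw [← h1] at h2
      linarith
    have hvnorm : 0 < ‖v‖ := norm_pos_iff.2 hvne
    refine ⟨‖v‖⁻¹ • v, ?_, c / ‖v‖, by positivity, ?_⟩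
    · rw [norm_smul, norm_inv, norm_norm]; field_simp
    · intro x hx
      have hfx : c < f x := hfb x (subset_convexHull ℝ C (hSC hx))
      have heq : ⟪x, ‖v‖⁻¹ • v⟫ = ‖v‖⁻¹ * f x := by
        rw [real_inner_smul_right, real_inner_comm, hvx]
      rw [heq, div_eq_inv_mul]
      exact mul_le_mul_of_nonneg_left hfx.le (by positivity)
  · rintro ⟨u, hu, α, hα, hSα⟩
    have hSb : Bornology.IsBounded S :=
      (sphere_bounded hn hc hnn hhom hzero).subset hsub
    set H : Set (EuclideanSpace ℝ (Fin n)) := {x | α ≤ ⟪x, u⟫} with hH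
    have hHcl : IsClosed H :=
      isClosed_le continuous_const (continuous_id.inner continuous_const)
    have hHconv : Convex ℝ H := by
      rintro x hx y hy a b ha hb hab
      simp only [hH, mem_setOf_eq] at hx hy ⊢
      rw [inner_add_left, real_inner_smul_left, real_inner_smul_left]
      nlinarith
    set K := closure (convexHull ℝ S) with hK
    have hKconv : Convex ℝ K := (convex_convexHull ℝ S).closure
    have hKcomp : IsCompact K := Metric.isCompact_of_isClosed_isBounded isClosed_closure
      ((isBounded_convexHull.2 hSb).closure)
    have hKH : K ⊆ H :=
      closure_minimal (convexHull_min (fun x hx => hSα x hx) hHconv) hHcl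
    have hΦK : ∀ x ∈ K, 0 < Φ x := by
      intro x hx
      have hxne : x ≠ 0 := by
        intro h
        have h1 := hKH hx
        rw [h] at h1
        simp only [hH, mem_setOf_eq, inner_zero_left] at h1
        linarith
      exact lt_of_le_of_ne (hnn x) (fun h => hxne ((hzero x).1 h.symm))
    refine ⟨rho Φ '' K, ?_, ?_, ?_, ?_⟩
    · rintro _ ⟨x, hx, rfl⟩
      exact rho_mem_sphere hhom hnn (hΦK x hx).ne'
    · have hcts : ContinuousOn (rho Φ) K :=
        (hc.continuousOn.inv₀ fun x hx => (hΦK x hx).ne').smul continuousOn_id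
      exact (hKcomp.image_of_continuousOn hcts).isClosed
    · intro x hx y hy l hl
      obtain ⟨a, haK, rfl⟩ := hx
      obtain ⟨b, hbK, rfl⟩ := hy
      have hΦa := hΦK a haK
      have hΦb := hΦK b hbK
      set c1 : ℝ := l * (Φ a)⁻¹ with hc1def
      set c2 : ℝ := (1 - l) * (Φ b)⁻¹ with hc2def
      have hc1 : 0 ≤ c1 := mul_nonneg hl.1 (by positivity)
      have hc2 : 0 ≤ c2 := mul_nonneg (by linarith [hl.2]) (by positivity)
      have hcs : 0 < c1 + c2 := by
        rcases lt_or_ge 0 l with h | h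
        · have : 0 < c1 := by rw [hc1def]; positivity
          linarith
        · have hl0 : l = 0 := le_antisymm h hl.1
          have : 0 < c2 := by rw [hc2def, hl0]; norm_num; positivity
          linarith
      set w := (c1 / (c1 + c2)) • a + (c2 / (c1 + c2)) • b with hwdef
      have hwK : w ∈ K := hKconv haK hbK (div_nonneg hc1 hcs.le) (div_nonneg hc2 hcs.le)
        (by field_simp)
      have key : l • rho Φ a + (1 - l) • rho Φ b = (c1 + c2) • w := by
        unfold rho
        rw [hwdef, smul_add, smul_smul, smul_smul, smul_smul, smul_smul]
        have e1 : (c1 + c2) * (c1 / (c1 + c2)) = c1 := by field_simp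
        have e2 : (c1 + c2) * (c2 / (c1 + c2)) = c2 := by field_simp
        rw [e1, e2]
      rw [key, rho_smul hhom hcs w]
      exact ⟨w, hwK, rfl⟩
    · intro x hx
      refine ⟨x, subset_closure (subset_convexHull ℝ S hx), ?_⟩
      unfold rho
      rw [show Φ x = 1 from hsub hx, inv_one, one_smul]
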